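/- Consider minimizing F(x) = (1/2)Σᵢ rᵢ‖xᵢ−aᵢ‖² + λΣ_{i<j} rᵢr_j‖xᵢ−x_j‖ over x ∈ ℝ^{nd} with rᵢ > 0, λ ≥ 0. The following δ-formulation is a valid weak-duality bound: for any δ_{ij} ∈ ℝᵈ (i<j) with ‖δ_{ij}‖ ≤ λ, we have min_x F(x) ≥ h'(δ), where h'(δ) = −(1/2)Σ_{j=1}ⁿ r_j‖Σ_{i=1}ⁿ r_i δ_{⟨ij⟩}‖² + Σ_{i,j=1}ⁿ r_i r_j ⟨δ_{⟨ij⟩}, a_j⟩, with δ_{⟨·⟩} the antisymmetric extension. -/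

import Mathlib

open Finset
open scoped RealInnerProductSpace

lemma son_pair_split {n : ℕ} (F : Fin n → Fin n → ℝ) (hsymm : ∀ i j, F i j = F j i)
    (hd : ∀ i, F i i = 0) :
    ∑ i, ∑ j, F i j
      = 2 * ∑ p ∈ Finset.univ.filter (fun p : Fin n × Fin n => p.1 < p.2), F p.1 p.2 := by
  classical
  have h1 : (∑ i, ∑ j, F i j) = ∑ p ∈ (Finset.univ : Finset (Fin n × Fin n)), F p.1 p.2 := by
    rw [← Finset.univ_product_univ, Finset.sum_product]
  rw [h1, ← Finset.sum_filter_add_sum_filter_not Finset.univ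
      (fun p : Fin n × Fin n => p.1 < p.2) (fun p => F p.1 p.2)]
  have h2 : ∑ p ∈ Finset.univ.filter (fun p : Fin n × Fin n => ¬ p.1 < p.2), F p.1 p.2
      = ∑ p ∈ Finset.univ.filter (fun p : Fin n × Fin n => p.1 < p.2), F p.1 p.2 := by
    rw [← Finset.sum_filter_add_sum_filter_not
        (Finset.univ.filter fun p : Fin n × Fin n => ¬ p.1 < p.2)
        (fun p => p.2 < p.1) (fun p => F p.1 p.2)]
    have hz : ∑ p ∈ (Finset.univ.filter fun p : Fin n × Fin n => ¬ p.1 < p.2).filter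
        (fun p => ¬ p.2 < p.1), F p.1 p.2 = 0 := by
      apply Finset.sum_eq_zero
      intro p hp
      simp only [Finset.mem_filter] at hp
      have hpe : p.1 = p.2 := le_antisymm (not_lt.1 hp.2) (not_lt.1 hp.1.2)
      rw [hpe]; exact hd p.2
    have hb : ∑ p ∈ (Finset.univ.filter fun p : Fin n × Fin n => ¬ p.1 < p.2).filter
        (fun p => p.2 < p.1), F p.1 p.2
        = ∑ p ∈ Finset.univ.filter (fun p : Fin n × Fin n => p.1 < p.2), F p.1 p.2 := by
      refine Finset.sum_nbij' (fun p => (p.2, p.1)) (fun p => (p.2, p.1)) ?_ ?_ ?_ ?_ ?_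
      · intro p hp
        simp only [Finset.mem_filter] at hp ⊢
        exact ⟨Finset.mem_univ _, hp.2⟩
      · intro p hp
        simp only [Finset.mem_filter] at hp ⊢
        exact ⟨⟨Finset.mem_univ _, not_lt.2 hp.2.le⟩, hp.2⟩
      · intro p _; rfl
      · intro p _; rfl
      · intro p _; exact hsymm p.1 p.2
    rw [hz, hb]; ring
  rw [h2]; ring

/-- Weak duality for sum-of-norms clustering with multiplicative weights. -/
theorem son_weak_duality {n d : ℕ}
    (a : Fin n → EuclideanSpace ℝ (Fin d)) (r : Fin n → ℝ) (lam : ℝ)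
    (hr : ∀ i, 0 < r i) (hlam : 0 ≤ lam)
    (δ : Fin n → Fin n → EuclideanSpace ℝ (Fin d))
    (hzero : ∀ i, δ i i = 0) (hanti : ∀ i j, δ i j = - δ j i)
    (hfeas : ∀ i j, i < j → ‖δ i j‖ ≤ lam) :
    ∀ x : Fin n → EuclideanSpace ℝ (Fin d),
      -(1/2) * ∑ j, r j * ‖∑ i, r i • δ i j‖^2
        + ∑ i, ∑ j, r i * r j * (inner ℝ (δ i j) (a j) : ℝ)
      ≤ (1/2) * ∑ i, r i * ‖x i - a i‖^2 +
        lam * ∑ p ∈ Finset.univ.filter (fun p : Fin n × Fin n => p.1 < p.2),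
          r p.1 * r p.2 * ‖x p.1 - x p.2‖ := by
  intro x
  set g : Fin n → EuclideanSpace ℝ (Fin d) := fun j => ∑ i, r i • δ i j with hg
  -- all δ's have norm ≤ lam
  have hfeas' : ∀ i j, ‖δ i j‖ ≤ lam := by
    intro i j
    rcases lt_trichotomy i j with h | h | h
    · exact hfeas i j h
    · rw [h, hzero]; simpa using hlam
    · rw [hanti i j, norm_neg]; exact hfeas j i h
  -- rewrite double sums of inner products against g
  have hdouble : ∀ y : Fin n → EuclideanSpace ℝ (Fin d),
      (∑ i, ∑ j, r i * r j * (inner ℝ (δ i j) (y j) : ℝ)) = ∑ j, r j * ⟪g j, y j⟫ := by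
    intro y
    rw [Finset.sum_comm]
    refine Finset.sum_congr rfl fun j _ => ?_
    rw [hg, sum_inner, Finset.mul_sum]
    refine Finset.sum_congr rfl fun i _ => ?_
    rw [real_inner_smul_left]; ring
  -- per-coordinate quadratic bound
  have hA : ∀ j, -(1/2) * (r j * ‖g j‖^2) + r j * ⟪g j, a j⟫
      ≤ 1/2 * (r j * ‖x j - a j‖^2) + r j * ⟪g j, x j⟫ := by
    intro j
    have hexp := norm_add_sq_real (x j - a j) (g j)
    rw [inner_sub_left, real_inner_comm (g j) (x j), real_inner_comm (g j) (a j)] at hexp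
    have h0 : (0:ℝ) ≤ ‖x j - a j + g j‖^2 := sq_nonneg _
    have key : (0:ℝ) ≤ ‖x j - a j‖^2 + 2*(⟪g j, x j⟫ - ⟪g j, a j⟫) + ‖g j‖^2 := by
      rw [← hexp]; exact h0
    have key2 := mul_le_mul_of_nonneg_left key (hr j).le
    nlinarith [key2]
  have hsumA : ∑ j, (-(1/2) * (r j * ‖g j‖^2) + r j * ⟪g j, a j⟫)
      ≤ ∑ j, (1/2 * (r j * ‖x j - a j‖^2) + r j * ⟪g j, x j⟫) :=
    Finset.sum_le_sum fun j _ => hA j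
  -- the antisymmetry identity: 2T = ∑∑ r i r j ⟪δ i j, x j - x i⟫
  have hT : (∑ i, ∑ j, r i * r j * (inner ℝ (δ i j) (x j - x i) : ℝ))
      = 2 * ∑ j, r j * ⟪g j, x j⟫ := by
    have e1 : (∑ i, ∑ j, r i * r j * (inner ℝ (δ i j) (x i) : ℝ))
        = - ∑ i, ∑ j, r i * r j * (inner ℝ (δ i j) (x j) : ℝ) := by
      rw [Finset.sum_comm]
      rw [← Finset.sum_neg_distrib]
      refine Finset.sum_congr rfl fun j _ => ?_
      rw [← Finset.sum_neg_distrib]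
      refine Finset.sum_congr rfl fun i _ => ?_
      rw [hanti i j, inner_neg_left]; ring
    have e2 : (∑ i, ∑ j, r i * r j * (inner ℝ (δ i j) (x j - x i) : ℝ))
        = (∑ i, ∑ j, r i * r j * (inner ℝ (δ i j) (x j) : ℝ))
          - ∑ i, ∑ j, r i * r j * (inner ℝ (δ i j) (x i) : ℝ) := by
      rw [← Finset.sum_sub_distrib]
      refine Finset.sum_congr rfl fun i _ => ?_
      rw [← Finset.sum_sub_distrib]
      refine Finset.sum_congr rfl fun j _ => ?_
      rw [inner_sub_right]; ring
    rw [e2, e1, ← hdouble x]; ring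
  -- pairwise bound for the regularization term
  have hpair : (∑ i, ∑ j, r i * r j * (inner ℝ (δ i j) (x j - x i) : ℝ))
      ≤ lam * ∑ i, ∑ j, r i * r j * ‖x i - x j‖ := by
    rw [Finset.mul_sum]
    refine Finset.sum_le_sum fun i _ => ?_
    rw [Finset.mul_sum]
    refine Finset.sum_le_sum fun j _ => ?_
    have h1 : (inner ℝ (δ i j) (x j - x i) : ℝ) ≤ lam * ‖x i - x j‖ := by
      rw [norm_sub_rev]
      exact (real_inner_le_norm _ _).trans
        (mul_le_mul_of_nonneg_right (hfeas' i j) (norm_nonneg _))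
    calc r i * r j * (inner ℝ (δ i j) (x j - x i) : ℝ)
        ≤ r i * r j * (lam * ‖x j - x i‖) := by
          rw [norm_sub_rev]
          exact mul_le_mul_of_nonneg_left h1 (mul_nonneg (hr i).le (hr j).le)
      _ = lam * (r i * r j * ‖x i - x j‖) := by rw [norm_sub_rev]; ring
  have hsplit : (∑ i, ∑ j, r i * r j * ‖x i - x j‖)
      = 2 * ∑ p ∈ Finset.univ.filter (fun p : Fin n × Fin n => p.1 < p.2),
          r p.1 * r p.2 * ‖x p.1 - x p.2‖ := by
    refine son_pair_split _ (fun i j => ?_) (fun i => by simp)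
    rw [norm_sub_rev]; ring
  -- combine
  have hLHS : -(1/2) * ∑ j, r j * ‖g j‖^2
        + ∑ i, ∑ j, r i * r j * (inner ℝ (δ i j) (a j) : ℝ)
      = ∑ j, (-(1/2) * (r j * ‖g j‖^2) + r j * ⟪g j, a j⟫) := by
    rw [hdouble a, Finset.sum_add_distrib, ← Finset.mul_sum]
  have hRHS : ∑ j, (1/2 * (r j * ‖x j - a j‖^2) + r j * ⟪g j, x j⟫)
      = (1/2) * (∑ i, r i * ‖x i - a i‖^2) + ∑ j, r j * ⟪g j, x j⟫ := by
    rw [Finset.sum_add_distrib, ← Finset.mul_sum]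
  rw [hsplit, hT] at hpair
  have := hsumA
  rw [hRHS] at this
  rw [← hg] at *
  calc -(1/2) * ∑ j, r j * ‖g j‖^2
        + ∑ i, ∑ j, r i * r j * (inner ℝ (δ i j) (a j) : ℝ)
      = ∑ j, (-(1/2) * (r j * ‖g j‖^2) + r j * ⟪g j, a j⟫) := hLHS
    _ ≤ (1/2) * (∑ i, r i * ‖x i - a i‖^2) + ∑ j, r j * ⟪g j, x j⟫ := this
    _ ≤ (1/2) * ∑ i, r i * ‖x i - a i‖^2 +
        lam * ∑ p ∈ Finset.univ.filter (fun p : Fin n × Fin n => p.1 < p.2),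
          r p.1 * r p.2 * ‖x p.1 - x p.2‖ := by linarith
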